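/- Let $X_1,\dots,X_m$ be independent real random variables with $\mathbf{E}[X_i]=0$ and $\mathbf{E}[|X_i|^p]<\infty$ for some $p\in(1,2]$. Then $\mathbf{E}[|\sum_{i=1}^m X_i|^p]\le 2\sum_{i=1}^m\mathbf{E}[|X_i|^p]$. -/

import Mathlib

open MeasureTheory ProbabilityTheory Real

lemma vbe_subadd {a b q : ℝ} (ha : 0 ≤ a) (hb : 0 ≤ b) (hq0 : 0 ≤ q) (hq1 : q ≤ 1) :
    (a + b) ^ q ≤ a ^ q + b ^ q := by
  have h := NNReal.rpow_add_le_add_rpow (a.toNNReal) (b.toNNReal) hq0 hq1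
  have h2 := NNReal.coe_le_coe.2 h
  simpa [NNReal.coe_rpow, Real.coe_toNNReal a ha, Real.coe_toNNReal b hb,
    ← Real.toNNReal_add ha hb, max_eq_left (add_nonneg ha hb)] using h2

lemma vbe_key_one {p : ℝ} (hp : 1 < p) (hp2 : p ≤ 2) (t : ℝ) :
    |1 + t| ^ p ≤ 1 + p * t + 2 * |t| ^ p := by
  have hp0 : (0:ℝ) < p := by linarith
  have hp1 : 0 ≤ p - 1 := by linarith
  have hp1' : p - 1 ≤ 1 := by linarith
  rcases le_or_gt 0 t with ht | ht
  · set F : ℝ → ℝ := fun t => 1 + p * t + t ^ p - (1 + t) ^ p with hF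
    have hder : ∀ x : ℝ, HasDerivAt F (p + p * x ^ (p-1) - p * (1+x) ^ (p-1) * 1) x := by
      intro x
      have h1 : HasDerivAt (fun t : ℝ => (1 + t) ^ p) (p * (1+x) ^ (p-1) * 1) x :=
        (Real.hasDerivAt_rpow_const (Or.inr hp.le)).comp x ((hasDerivAt_id x).const_add 1)
      have h2 : HasDerivAt (fun t : ℝ => t ^ p) (p * x ^ (p-1)) x :=
        Real.hasDerivAt_rpow_const (Or.inr hp.le)
      have h3 : HasDerivAt (fun t : ℝ => 1 + p * t) (p) x := by
        simpa using ((hasDerivAt_id x).const_mul p).const_add 1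
      simpa [hF] using (h3.fun_add h2).fun_sub h1
    have hmono : MonotoneOn F (Set.Ici (0:ℝ)) := by
      apply monotoneOn_of_deriv_nonneg (convex_Ici 0)
      · exact fun x _ => ((hder x).continuousAt).continuousWithinAt
      · exact fun x _ => ((hder x).differentiableAt).differentiableWithinAt
      · intro x hx
        rw [interior_Ici] at hx
        rw [(hder x).deriv]
        have hx0 : 0 < x := hx
        have hsub : (1 + x) ^ (p-1) ≤ 1 + x ^ (p-1) := by
          have := vbe_subadd (zero_le_one) hx0.le hp1 hp1'
          simpa [Real.one_rpow] using this
        nlinarith [hsub, hp0]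
    have h0 : F 0 = 0 := by
      simp [hF, Real.zero_rpow (ne_of_gt hp0), Real.one_rpow]
    have hm := hmono (Set.self_mem_Ici) (Set.mem_Ici.2 ht) ht
    rw [h0] at hm
    have habs : |1 + t| = 1 + t := abs_of_nonneg (by linarith)
    have habst : |t| = t := abs_of_nonneg ht
    have htp : 0 ≤ t ^ p := Real.rpow_nonneg ht p
    rw [habs, habst]
    simp only [hF] at hm
    linarith
  · rcases le_or_gt (-1) t with ht1 | ht1
    · set G : ℝ → ℝ := fun s => 1 - p * s + s ^ p - (1 - s) ^ p with hG
      have hder : ∀ x : ℝ, HasDerivAt G (-p + p * x ^ (p-1) - p * (1-x) ^ (p-1) * (-1)) x := by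
        intro x
        have h1 : HasDerivAt (fun s : ℝ => (1 - s) ^ p) (p * (1-x) ^ (p-1) * (-1)) x :=
          (Real.hasDerivAt_rpow_const (Or.inr hp.le)).comp x ((hasDerivAt_id x).const_sub 1)
        have h2 : HasDerivAt (fun s : ℝ => s ^ p) (p * x ^ (p-1)) x :=
          Real.hasDerivAt_rpow_const (Or.inr hp.le)
        have h3 : HasDerivAt (fun s : ℝ => 1 - p * s) (-p) x := by
          simpa using ((hasDerivAt_id x).const_mul p).const_sub 1
        have := (h3.fun_add h2).fun_sub h1
        simp only [hG]
        convert this using 1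
      have hmono : MonotoneOn G (Set.Icc (0:ℝ) 1) := by
        apply monotoneOn_of_deriv_nonneg (convex_Icc 0 1)
        · exact fun x _ => ((hder x).continuousAt).continuousWithinAt
        · exact fun x _ => ((hder x).differentiableAt).differentiableWithinAt
        · intro x hx
          rw [interior_Icc] at hx
          rw [(hder x).deriv]
          have hsub : (1:ℝ) ≤ x ^ (p-1) + (1-x) ^ (p-1) := by
            have := vbe_subadd hx.1.le (by linarith [hx.2] : (0:ℝ) ≤ 1 - x) hp1 hp1'
            simpa [Real.one_rpow] using this
          nlinarith [hsub, hp0]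
      have h0 : G 0 = 0 := by
        simp [hG, Real.zero_rpow (ne_of_gt hp0), Real.one_rpow]
      have hm := hmono (Set.left_mem_Icc.2 zero_le_one)
        (Set.mem_Icc.2 ⟨by linarith, by linarith⟩) (by linarith : (0:ℝ) ≤ -t)
      rw [h0] at hm
      simp only [hG] at hm
      have habs : |1 + t| = 1 - (-t) := by
        rw [abs_of_nonneg (by linarith : (0:ℝ) ≤ 1 + t)]; ring
      have habst : |t| = -t := abs_of_neg ht
      have hsp : 0 ≤ (-t) ^ p := Real.rpow_nonneg (by linarith) p
      rw [habs, habst]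
      linarith
    · set H : ℝ → ℝ := fun s => 1 - p * s + 2 * s ^ p - (s - 1) ^ p with hH
      have hder : ∀ x : ℝ, HasDerivAt H (-p + 2 * (p * x ^ (p-1)) - p * (x-1) ^ (p-1) * 1) x := by
        intro x
        have h1 : HasDerivAt (fun s : ℝ => (s - 1) ^ p) (p * (x-1) ^ (p-1) * 1) x :=
          (Real.hasDerivAt_rpow_const (Or.inr hp.le)).comp x ((hasDerivAt_id x).sub_const 1)
        have h2 : HasDerivAt (fun s : ℝ => 2 * s ^ p) (2 * (p * x ^ (p-1))) x :=
          (Real.hasDerivAt_rpow_const (Or.inr hp.le)).const_mul 2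
        have h3 : HasDerivAt (fun s : ℝ => 1 - p * s) (-p) x := by
          simpa using ((hasDerivAt_id x).const_mul p).const_sub 1
        have := (h3.fun_add h2).fun_sub h1
        simp only [hH]
        convert this using 1
      have hmono : MonotoneOn H (Set.Ici (1:ℝ)) := by
        apply monotoneOn_of_deriv_nonneg (convex_Ici 1)
        · exact fun x _ => ((hder x).continuousAt).continuousWithinAt
        · exact fun x _ => ((hder x).differentiableAt).differentiableWithinAt
        · intro x hx
          rw [interior_Ici] at hx
          have hx1 : (1:ℝ) < x := hx
          rw [(hder x).deriv]
          have h1 : (x - 1) ^ (p-1) ≤ x ^ (p-1) :=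
            Real.rpow_le_rpow (by linarith) (by linarith) hp1
          have h2 : (1:ℝ) ≤ x ^ (p-1) := Real.one_le_rpow (by linarith) hp1
          nlinarith [h1, h2, hp0]
      have h1 : H 1 = 3 - p := by
        simp [hH, Real.zero_rpow (ne_of_gt hp0), Real.one_rpow]
        ring
      have hm := hmono (Set.self_mem_Ici) (Set.mem_Ici.2 (by linarith : (1:ℝ) ≤ -t))
        (by linarith : (1:ℝ) ≤ -t)
      rw [h1] at hm
      simp only [hH] at hm
      have habs : |1 + t| = (-t) - 1 := by rw [abs_of_neg (by linarith)]; ring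
      have habst : |t| = -t := abs_of_neg ht
      rw [habs, habst]
      linarith

lemma vbe_key_two_pos {p : ℝ} (hp : 1 < p) (hp2 : p ≤ 2) {x : ℝ} (hx : 0 < x) (y : ℝ) :
    |x + y| ^ p ≤ |x| ^ p + p * (x * |x| ^ (p - 2)) * y + 2 * |y| ^ p := by
  have h := vbe_key_one hp hp2 (y / x)
  have hxp : 0 < x ^ p := Real.rpow_pos_of_pos hx p
  have hax : |x| = x := abs_of_pos hx
  have e1 : x ^ p * |1 + y / x| ^ p = |x + y| ^ p := by
    have hxy : x + y = x * (1 + y / x) := by field_simp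
    rw [hxy, abs_mul, abs_of_pos hx, Real.mul_rpow hx.le (abs_nonneg _)]
  have e2 : x ^ p * |y / x| ^ p = |y| ^ p := by
    have hxy : y = x * (y / x) := by field_simp
    rw [show |y| ^ p = |x * (y / x)| ^ p by rw [← hxy], abs_mul, abs_of_pos hx,
      Real.mul_rpow hx.le (abs_nonneg _)]
  have hxx : x * x ^ (p - 2) = x ^ (p - 1) := by
    rw [show p - 1 = 1 + (p - 2) by ring, Real.rpow_add hx, Real.rpow_one]
  have hxp1 : x ^ p = x * x ^ (p - 1) := by
    rw [show p = 1 + (p - 1) by ring, Real.rpow_add hx, Real.rpow_one]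
    norm_num
  have e3 : x ^ p * (p * (y / x)) = p * (x * x ^ (p - 2)) * y := by
    rw [hxx, hxp1]
    field_simp
  have hm := mul_le_mul_of_nonneg_left h hxp.le
  calc |x + y| ^ p = x ^ p * |1 + y / x| ^ p := e1.symm
    _ ≤ x ^ p * (1 + p * (y / x) + 2 * |y / x| ^ p) := hm
    _ = x ^ p + x ^ p * (p * (y / x)) + 2 * (x ^ p * |y / x| ^ p) := by ring
    _ = |x| ^ p + p * (x * |x| ^ (p - 2)) * y + 2 * |y| ^ p := by
        rw [hax, e2, e3]

lemma vbe_key_two {p : ℝ} (hp : 1 < p) (hp2 : p ≤ 2) (x y : ℝ) :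
    |x + y| ^ p ≤ |x| ^ p + p * (x * |x| ^ (p - 2)) * y + 2 * |y| ^ p := by
  have hp0 : (0:ℝ) < p := by linarith
  rcases lt_trichotomy x 0 with hx | hx | hx
  · calc |x + y| ^ p = |-x + -y| ^ p := by
          rw [show -x + -y = -(x + y) by ring, abs_neg]
      _ ≤ |(-x)| ^ p + p * (-x * |(-x)| ^ (p - 2)) * (-y) + 2 * |(-y)| ^ p :=
          vbe_key_two_pos hp hp2 (by linarith) (-y)
      _ = |x| ^ p + p * (x * |x| ^ (p - 2)) * y + 2 * |y| ^ p := by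
          rw [abs_neg, abs_neg]; ring
  · subst hx
    simp only [zero_add, abs_zero, Real.zero_rpow (ne_of_gt hp0), zero_mul, mul_zero, zero_add]
    nlinarith [Real.rpow_nonneg (abs_nonneg y) p]
  · exact vbe_key_two_pos hp hp2 hx y

lemma vbe_abs_h {p : ℝ} (hp : 1 < p) (x : ℝ) :
    |x * |x| ^ (p - 2)| = |x| ^ (p - 1) := by
  rcases eq_or_ne x 0 with rfl | hx
  · simp [Real.zero_rpow (show p - 1 ≠ 0 by intro h; nlinarith [h])]
  · have hx0 : 0 < |x| := abs_pos.2 hx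
    rw [abs_mul, abs_of_nonneg (Real.rpow_nonneg (abs_nonneg x) _),
      show p - 1 = 1 + (p - 2) by ring, Real.rpow_add hx0, Real.rpow_one]

lemma vbe_abs_h_le {p : ℝ} (hp : 1 < p) (x : ℝ) :
    |x| ^ (p - 1) ≤ 1 + |x| ^ p := by
  rcases le_or_gt (|x|) 1 with h | h
  · have h1 : |x| ^ (p - 1) ≤ 1 := Real.rpow_le_one (abs_nonneg x) h (by linarith)
    have h2 := Real.rpow_nonneg (abs_nonneg x) p
    linarith
  · have h1 : |x| ^ (p - 1) ≤ |x| ^ p :=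
      Real.rpow_le_rpow_of_exponent_le h.le (by linarith)
    linarith

lemma vbe_two_rpow {p a b : ℝ} (hp : 1 ≤ p) (ha : 0 ≤ a) (hb : 0 ≤ b) :
    (a + b) ^ p ≤ 2 ^ p * (a ^ p + b ^ p) := by
  have hp0 : (0:ℝ) ≤ p := by linarith
  have h1 : a + b ≤ 2 * max a b := by
    rcases le_total a b with h | h
    · rw [max_eq_right h]; linarith
    · rw [max_eq_left h]; linarith
  have h2 : (a + b) ^ p ≤ (2 * max a b) ^ p :=
    Real.rpow_le_rpow (by positivity) h1 hp0
  have h3 : (2 * max a b) ^ p = 2 ^ p * (max a b) ^ p :=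
    Real.mul_rpow (by norm_num) (le_max_of_le_left ha)
  have h4 : (max a b) ^ p ≤ a ^ p + b ^ p := by
    rcases le_total a b with h | h
    · rw [max_eq_right h]; nlinarith [Real.rpow_nonneg ha p]
    · rw [max_eq_left h]; nlinarith [Real.rpow_nonneg hb p]
  have h5 : (0:ℝ) ≤ 2 ^ p := Real.rpow_nonneg (by norm_num) p
  nlinarith [h2, h3, h4, h5]

lemma vbe_int_add {Ω : Type*} [MeasurableSpace Ω] {P : Measure Ω} [IsProbabilityMeasure P]
    {p : ℝ} (hp : 1 < p) {f g : Ω → ℝ} (hf : Measurable f) (hg : Measurable g)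
    (hfp : Integrable (fun ω => |f ω| ^ p) P) (hgp : Integrable (fun ω => |g ω| ^ p) P) :
    Integrable (fun ω => |f ω + g ω| ^ p) P := by
  have hmeas : Measurable fun ω => |f ω + g ω| ^ p :=
    (Real.continuous_rpow_const (by linarith : (0:ℝ) ≤ p)).measurable.comp (hf.add hg).abs
  refine Integrable.mono ((hfp.add hgp).const_mul (2 ^ p)) hmeas.aestronglyMeasurable ?_
  filter_upwards with ω
  have h2 : |f ω + g ω| ^ p ≤ (|f ω| + |g ω|) ^ p :=
    Real.rpow_le_rpow (abs_nonneg _) (abs_add_le _ _) (by linarith)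
  have h3 : (|f ω| + |g ω|) ^ p ≤ 2 ^ p * (|f ω| ^ p + |g ω| ^ p) :=
    vbe_two_rpow (by linarith) (abs_nonneg _) (abs_nonneg _)
  have h4 : (0:ℝ) ≤ |f ω + g ω| ^ p := Real.rpow_nonneg (abs_nonneg _) p
  rw [Real.norm_eq_abs, Real.norm_eq_abs, abs_of_nonneg h4]
  calc |f ω + g ω| ^ p ≤ 2 ^ p * (|f ω| ^ p + |g ω| ^ p) := le_trans h2 h3
    _ ≤ |2 ^ p * (|f ω| ^ p + |g ω| ^ p)| := le_abs_self _

lemma vbe_step {Ω : Type*} [MeasurableSpace Ω] {P : Measure Ω} [IsProbabilityMeasure P]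
    {p : ℝ} (hp : 1 < p) (hp2 : p ≤ 2) {f g : Ω → ℝ}
    (hf : Measurable f) (hg : Measurable g)
    (hfg : IndepFun f g P) (hgi : Integrable g P) (hgm : ∫ ω, g ω ∂P = 0)
    (hfp : Integrable (fun ω => |f ω| ^ p) P) (hgp : Integrable (fun ω => |g ω| ^ p) P) :
    ∫ ω, |f ω + g ω| ^ p ∂P ≤ ∫ ω, |f ω| ^ p ∂P + 2 * ∫ ω, |g ω| ^ p ∂P := by
  have hp0 : (0:ℝ) < p := by linarith
  set h : Ω → ℝ := fun ω => f ω * |f ω| ^ (p - 2) with hh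
  have hφm : Measurable fun x : ℝ => x * |x| ^ (p - 2) := by measurability
  have hhm : Measurable h := hφm.comp hf
  have hhi : Integrable h P := by
    refine Integrable.mono ((integrable_const (1:ℝ)).add hfp) hhm.aestronglyMeasurable ?_
    filter_upwards with ω
    simp only [Pi.add_apply, Real.norm_eq_abs]
    have h1 : |h ω| = |f ω| ^ (p - 1) := vbe_abs_h hp (f ω)
    have h2 : |f ω| ^ (p - 1) ≤ 1 + |f ω| ^ p := vbe_abs_h_le hp (f ω)
    have h3 : (0:ℝ) ≤ 1 + |f ω| ^ p := by
      have := Real.rpow_nonneg (abs_nonneg (f ω)) p; linarith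
    rw [h1, abs_of_nonneg h3]
    exact h2
  have hIndep2 : IndepFun h g P := hfg.comp hφm measurable_id
  have hhg : Integrable (fun ω => h ω * g ω) P := hIndep2.integrable_mul hhi hgi
  have hint0 : ∫ ω, h ω * g ω ∂P = 0 := by
    have hm := IndepFun.integral_fun_mul_eq_mul_integral hIndep2 hhi.aestronglyMeasurable hgi.aestronglyMeasurable
    calc ∫ ω, h ω * g ω ∂P = (∫ ω, h ω ∂P) * ∫ ω, g ω ∂P := hm
      _ = 0 := by rw [hgm, mul_zero]
  have hLHS : Integrable (fun ω => |f ω + g ω| ^ p) P := vbe_int_add hp hf hg hfp hgp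
  have hRHS : Integrable (fun ω => |f ω| ^ p + p * (h ω * g ω) + 2 * |g ω| ^ p) P :=
    (hfp.add (hhg.const_mul p)).add (hgp.const_mul 2)
  have hmono : ∫ ω, |f ω + g ω| ^ p ∂P ≤
      ∫ ω, (|f ω| ^ p + p * (h ω * g ω) + 2 * |g ω| ^ p) ∂P := by
    refine integral_mono hLHS hRHS (fun ω => ?_)
    have hk := vbe_key_two hp hp2 (f ω) (g ω)
    have e : p * (h ω * g ω) = p * (f ω * |f ω| ^ (p - 2)) * g ω := by
      simp only [hh]; ring
    rw [e]
    exact hk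
  have hR1 : ∫ ω, (|f ω| ^ p + p * (h ω * g ω) + 2 * |g ω| ^ p) ∂P
      = (∫ ω, (|f ω| ^ p + p * (h ω * g ω)) ∂P) + ∫ ω, 2 * |g ω| ^ p ∂P :=
    integral_add (hfp.add (hhg.const_mul p)) (hgp.const_mul 2)
  have hR2 : ∫ ω, (|f ω| ^ p + p * (h ω * g ω)) ∂P
      = (∫ ω, |f ω| ^ p ∂P) + ∫ ω, p * (h ω * g ω) ∂P :=
    integral_add hfp (hhg.const_mul p)
  have hR3 : ∫ ω, p * (h ω * g ω) ∂P = p * ∫ ω, h ω * g ω ∂P := integral_const_mul _ _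
  have hR4 : ∫ ω, 2 * |g ω| ^ p ∂P = 2 * ∫ ω, |g ω| ^ p ∂P := integral_const_mul _ _
  rw [hR1, hR2, hR3, hR4, hint0, mul_zero, add_zero] at hmono
  exact hmono

/-- von Bahr–Esseen / Petrov inequality: for independent centered real random
variables `X₁, …, X_m` with finite `p`-th moments, `1 < p ≤ 2`,
`E[|∑ X_i|^p] ≤ 2 ∑ E[|X_i|^p]`. -/
theorem von_bahr_esseen {Ω : Type*} [MeasurableSpace Ω] (P : Measure Ω)
    [IsProbabilityMeasure P] (m : ℕ) (X : Fin m → Ω → ℝ) (p : ℝ)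
    (hp : 1 < p) (hp2 : p ≤ 2)
    (hmeas : ∀ i, Measurable (X i))
    (hindep : iIndepFun X P)
    (hint : ∀ i, Integrable (X i) P)
    (hmean : ∀ i, ∫ ω, X i ω ∂P = 0)
    (hmom : ∀ i, Integrable (fun ω => |X i ω| ^ p) P) :
    ∫ ω, |∑ i, X i ω| ^ p ∂P ≤ 2 * ∑ i, ∫ ω, |X i ω| ^ p ∂P := by
  have hp0 : (0:ℝ) < p := by linarith
  have key : ∀ s : Finset (Fin m),
      Integrable (fun ω => |∑ i ∈ s, X i ω| ^ p) P ∧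
      ∫ ω, |∑ i ∈ s, X i ω| ^ p ∂P ≤ 2 * ∑ i ∈ s, ∫ ω, |X i ω| ^ p ∂P := by
    intro s
    induction s using Finset.cons_induction with
    | empty =>
      constructor
      · simpa [Real.zero_rpow (ne_of_gt hp0)] using integrable_const (c := (0:ℝ)) (μ := P)
      · simp [Real.zero_rpow (ne_of_gt hp0)]
    | cons i s his ih =>
      have hsm : Measurable fun ω => ∑ j ∈ s, X j ω :=
        Finset.measurable_sum s (fun j _ => hmeas j)
      have hind : IndepFun (fun ω => ∑ j ∈ s, X j ω) (X i) P := by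
        have hI := hindep.indepFun_finsetSum_of_notMem hmeas his
        have e : (∑ j ∈ s, X j) = fun ω => ∑ j ∈ s, X j ω := by
          funext ω; simp
        rwa [e] at hI
      have hstep := vbe_step hp hp2 hsm (hmeas i) hind (hint i) (hmean i) ih.1 (hmom i)
      have hsum : ∀ ω : Ω, ∑ j ∈ Finset.cons i s his, X j ω = (∑ j ∈ s, X j ω) + X i ω := by
        intro ω; rw [Finset.sum_cons]; ring
      constructor
      · have hi2 := vbe_int_add hp hsm (hmeas i) ih.1 (hmom i)
        have e : (fun ω => |∑ j ∈ Finset.cons i s his, X j ω| ^ p) =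
            fun ω => |(∑ j ∈ s, X j ω) + X i ω| ^ p := by
          funext ω; rw [hsum ω]
        rw [e]
        exact hi2
      · calc ∫ ω, |∑ j ∈ Finset.cons i s his, X j ω| ^ p ∂P
            = ∫ ω, |(∑ j ∈ s, X j ω) + X i ω| ^ p ∂P := by
              congr 1; funext ω; rw [hsum ω]
          _ ≤ ∫ ω, |∑ j ∈ s, X j ω| ^ p ∂P + 2 * ∫ ω, |X i ω| ^ p ∂P := hstep
          _ ≤ 2 * ∑ j ∈ s, ∫ ω, |X j ω| ^ p ∂P + 2 * ∫ ω, |X i ω| ^ p ∂P := by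
              linarith [ih.2]
          _ = 2 * ∑ j ∈ Finset.cons i s his, ∫ ω, |X j ω| ^ p ∂P := by
              rw [Finset.sum_cons]; ring
  exact (key Finset.univ).2
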